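/- Let 0 < L ≤ 1 and let p be a positive, L-periodic, C² solution of (a_L(x) p')' + f(x/L, p) = 0 on ℝ with 0 < p ≤ M. Then for every compact interval K ⊂ ℝ, ∫_K (p'(x))² dx ≤ ((|K| + 2)/α₁) · M · max_{(x,s) ∈ [0,1]×[0,M]} |f(x,s)|, where |K| denotes the length of K; in particular the bound is independent of L. -/

import Mathlib

open MeasureTheory Filter Topology

/-- For `0 < L ≤ 1` and `p` a positive `L`-periodic `C²` solution of
`(a_L p')' + f(x/L,p) = 0` with `0 < p ≤ M`, for every compact interval
`K = [x₁,x₂]`, `∫_K (p')² ≤ ((|K|+2)/α₁) · M · max_{[0,1]×[0,M]} |f|`,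
a bound independent of `L`. -/
theorem stationary_state_H1_bound
    (a : ℝ → ℝ) (f : ℝ → ℝ → ℝ) (α₁ α₂ L M : ℝ) (p : ℝ → ℝ)
    (ha_C2 : ContDiff ℝ 2 a) (ha_per : ∀ x, a (x + 1) = a x)
    (hα₁ : 0 < α₁) (hα₁₂ : α₁ < α₂)
    (ha_lb : ∀ x, α₁ ≤ a x) (ha_ub : ∀ x, a x ≤ α₂)
    (hf_per : ∀ x s, f (x + 1) s = f x s)
    (hf_C1 : ContDiff ℝ 1 (fun q : ℝ × ℝ => f q.1 q.2))
    (hf_zero : ∀ x, f x 0 = 0)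
    (hM : 0 ≤ M) (hf_M : ∀ x s, M ≤ s → f x s ≤ 0)
    (hL : 0 < L) (hL1 : L ≤ 1)
    (hp_C2 : ContDiff ℝ 2 p)
    (hp_pos : ∀ x, 0 < p x) (hp_le : ∀ x, p x ≤ M)
    (hp_per : ∀ x, p (x + L) = p x)
    (hp_eq : ∀ x, deriv (fun y => a (y / L) * deriv p y) x + f (x / L) (p x) = 0) :
    ∀ x₁ x₂ : ℝ, x₁ ≤ x₂ →
      ∀ B : ℝ, (∀ x ∈ Set.Icc (0:ℝ) 1, ∀ s ∈ Set.Icc (0:ℝ) M, |f x s| ≤ B) →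
        (∫ x in x₁..x₂, (deriv p x) ^ 2) ≤ ((x₂ - x₁ + 2) / α₁) * M * B := by
  intro x₁ x₂ hx B hB
  -- Basic regularity facts
  have hpc : Continuous p := hp_C2.continuous
  have hdp_cd : ContDiff ℝ 1 (deriv p) := by
    have h2 : ContDiff ℝ ((1 : ℕ) + 1) p := by exact_mod_cast hp_C2
    exact (contDiff_succ_iff_deriv.mp h2).2.2
  have hdp_c : Continuous (deriv p) := hdp_cd.continuous
  set q : ℝ → ℝ := fun y => a (y / L) * deriv p y with hq_def
  have hdivL : Continuous fun x : ℝ => x / L := continuous_id.div_const L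
  have hq_cd : ContDiff ℝ 1 q :=
    ((ha_C2.of_le one_le_two).comp (contDiff_id.div_const L)).mul hdp_cd
  have hq_c : Continuous q := hq_cd.continuous
  have hcf : Continuous fun x => f (x / L) (p x) :=
    hf_C1.continuous.comp (hdivL.prodMk hpc)
  have hq_deriv : ∀ x, HasDerivAt q (-(f (x / L) (p x))) x := by
    intro x
    have h1 := ((hq_cd.differentiable one_ne_zero) x).hasDerivAt
    have h2 : deriv q x = -(f (x / L) (p x)) := by
      have := hp_eq x; simp only [hq_def]; linarith
    rwa [h2] at h1
  have hg : ∀ x, HasDerivAt (fun y => q y * p y)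
      (-(f (x / L) (p x)) * p x + q x * deriv p x) x := fun x =>
    (hq_deriv x).mul ((hp_C2.differentiable two_ne_zero) x).hasDerivAt
  -- B is nonnegative
  have hB0 : 0 ≤ B :=
    le_trans (abs_nonneg _) (hB 0 ⟨le_rfl, zero_le_one⟩ 0 ⟨le_rfl, hM⟩)
  -- f(x/L, p x) ≤ B
  have hBf : ∀ x, f (x / L) (p x) ≤ B := by
    intro x
    set t := x / L
    have hper : Function.Periodic (fun y => f y (p x)) 1 := fun y => hf_per y (p x)
    have heq : f (Int.fract t) (p x) = f t (p x) := by
      have h := hper.sub_int_mul_eq (x := t) (n := ⌊t⌋)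
      rw [mul_one, Int.self_sub_floor] at h
      exact h
    have hb := hB (Int.fract t) ⟨Int.fract_nonneg t, (Int.fract_lt_one t).le⟩
      (p x) ⟨(hp_pos x).le, hp_le x⟩
    calc f t (p x) = f (Int.fract t) (p x) := heq.symm
      _ ≤ |f (Int.fract t) (p x)| := le_abs_self _
      _ ≤ B := hb
  -- Rolle: critical points near x₁ and x₂
  obtain ⟨c₁, hc₁mem, hc₁⟩ : ∃ c ∈ Set.Ioo (x₁ - L) x₁, deriv p c = 0 := by
    apply exists_deriv_eq_zero (by linarith) hpc.continuousOn
    have := hp_per (x₁ - L); simpa using this.symm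
  obtain ⟨c₂, hc₂mem, hc₂⟩ : ∃ c ∈ Set.Ioo x₂ (x₂ + L), deriv p c = 0 := by
    apply exists_deriv_eq_zero (by linarith) hpc.continuousOn
    exact (hp_per x₂).symm
  have hc12 : c₁ ≤ c₂ := le_trans hc₁mem.2.le (le_trans hx hc₂mem.1.le)
  -- integration by parts over [c₁, c₂]
  have hint1 : IntervalIntegrable (fun x => -(f (x / L) (p x)) * p x) volume c₁ c₂ :=
    (hcf.neg.mul hpc).intervalIntegrable _ _
  have hint2 : IntervalIntegrable (fun x => q x * deriv p x) volume c₁ c₂ :=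
    (hq_c.mul hdp_c).intervalIntegrable _ _
  have hftc := intervalIntegral.integral_eq_sub_of_hasDerivAt
    (f := fun y => q y * p y) (fun x _ => hg x)
    (((hcf.neg.mul hpc).add (hq_c.mul hdp_c)).intervalIntegrable c₁ c₂)
  have hgc : q c₂ * p c₂ - q c₁ * p c₁ = 0 := by
    simp [hq_def, hc₁, hc₂]
  rw [hgc, intervalIntegral.integral_add hint1 hint2] at hftc
  have hkey : (∫ x in c₁..c₂, q x * deriv p x)
      = ∫ x in c₁..c₂, f (x / L) (p x) * p x := by
    have : (∫ x in c₁..c₂, -(f (x / L) (p x)) * p x)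
        = -∫ x in c₁..c₂, f (x / L) (p x) * p x := by
      rw [← intervalIntegral.integral_neg]; congr 1; funext x; ring
    rw [this] at hftc; linarith
  -- pointwise bounds and chaining
  have hstep1 : (∫ x in x₁..x₂, (deriv p x) ^ 2)
      ≤ ∫ x in c₁..c₂, (deriv p x) ^ 2 := by
    apply intervalIntegral.integral_mono_interval hc₁mem.2.le hx hc₂mem.1.le
    · exact Filter.Eventually.of_forall fun x => sq_nonneg _
    · exact ((hdp_c.pow 2).intervalIntegrable _ _)
  have hstep2 : (∫ x in c₁..c₂, α₁ * (deriv p x) ^ 2)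
      ≤ ∫ x in c₁..c₂, q x * deriv p x := by
    apply intervalIntegral.integral_mono_on hc12
      ((continuous_const.mul (hdp_c.pow 2)).intervalIntegrable _ _) hint2
    intro x _
    have h1 : q x * deriv p x = a (x / L) * (deriv p x) ^ 2 := by
      simp only [hq_def]; ring
    rw [h1]
    exact mul_le_mul_of_nonneg_right (ha_lb _) (sq_nonneg _)
  have hstep3 : (∫ x in c₁..c₂, f (x / L) (p x) * p x)
      ≤ (c₂ - c₁) * (B * M) := by
    have := intervalIntegral.integral_mono_on hc12
      ((hcf.mul hpc).intervalIntegrable _ _)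
      (intervalIntegrable_const (μ := volume) (c := B * M))
      (fun x _ => mul_le_mul (hBf x) (hp_le x) (hp_pos x).le hB0)
    simpa [mul_comm, mul_assoc, mul_left_comm] using this
  have hconst : (∫ x in c₁..c₂, α₁ * (deriv p x) ^ 2)
      = α₁ * ∫ x in c₁..c₂, (deriv p x) ^ 2 := by
    rw [intervalIntegral.integral_const_mul]
  have hcc : c₂ - c₁ ≤ x₂ - x₁ + 2 := by
    have := hc₁mem.1; have := hc₂mem.2; linarith
  have hBM : 0 ≤ B * M := mul_nonneg hB0 hM
  have hfinal : α₁ * (∫ x in x₁..x₂, (deriv p x) ^ 2) ≤ (x₂ - x₁ + 2) * (B * M) := by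
    have h1 : α₁ * (∫ x in x₁..x₂, (deriv p x) ^ 2)
        ≤ α₁ * ∫ x in c₁..c₂, (deriv p x) ^ 2 :=
      mul_le_mul_of_nonneg_left hstep1 hα₁.le
    have h2 : (c₂ - c₁) * (B * M) ≤ (x₂ - x₁ + 2) * (B * M) :=
      mul_le_mul_of_nonneg_right hcc hBM
    calc α₁ * (∫ x in x₁..x₂, (deriv p x) ^ 2)
        ≤ α₁ * ∫ x in c₁..c₂, (deriv p x) ^ 2 := h1
      _ = ∫ x in c₁..c₂, α₁ * (deriv p x) ^ 2 := hconst.symm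
      _ ≤ ∫ x in c₁..c₂, q x * deriv p x := hstep2
      _ = ∫ x in c₁..c₂, f (x / L) (p x) * p x := hkey
      _ ≤ (c₂ - c₁) * (B * M) := hstep3
      _ ≤ (x₂ - x₁ + 2) * (B * M) := h2
  rw [div_mul_eq_mul_div, div_mul_eq_mul_div, le_div_iff₀ hα₁]
  nlinarith [hfinal]
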